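/- If D̄ = 0, then every stationary point of f is a global minimizer: any P ∈ ℝ^{n×d} with K*(F(P))P = 0 satisfies F(P) = 0. -/
import Mathlib


open Matrix

attribute [local instance] Matrix.frobeniusNormedAddCommGroup Matrix.frobeniusNormedSpace

noncomputable section

/-- The all-ones vector in `ℝⁿ`. -/
def eV (n : ℕ) : Fin n → ℝ := fun _ => 1

/-- The Lindenstrauss operator `K(G) = diag(G)eᵀ + e diag(G)ᵀ − 2G`. -/
def Kop {n : ℕ} (G : Matrix (Fin n) (Fin n) ℝ) : Matrix (Fin n) (Fin n) ℝ :=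
  vecMulVec G.diag (eV n) + vecMulVec (eV n) G.diag - (2 : ℝ) • G

/-- The adjoint `K*(S) = 2(Diag(Se) − S)`. -/
def Kstar {n : ℕ} (S : Matrix (Fin n) (Fin n) ℝ) : Matrix (Fin n) (Fin n) ℝ :=
  (2 : ℝ) • (Matrix.diagonal (S *ᵥ eV n) - S)

/-- `F(P) = K(PPᵀ) − D̄`, where `D̄ = K(P̄P̄ᵀ)`. -/
def Fm {n d : ℕ} (Pbar P : Matrix (Fin n) (Fin d) ℝ) : Matrix (Fin n) (Fin n) ℝ :=
  Kop (P * Pᵀ) - Kop (Pbar * Pbarᵀ)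

/-- `f(P) = (1/2)‖F(P)‖²` with the Frobenius norm. -/
def fObj {n d : ℕ} (Pbar P : Matrix (Fin n) (Fin d) ℝ) : ℝ :=
  (1 / 2) * ‖Fm Pbar P‖ ^ 2

/-- The Hessian quadratic form of `f` at `P`:
`Q_P(ΔP) = ‖K(PΔPᵀ + ΔPPᵀ)‖² + 2⟨F(P), K(ΔPΔPᵀ)⟩`. -/
def QForm {n d : ℕ} (Pbar P ΔP : Matrix (Fin n) (Fin d) ℝ) : ℝ :=
  ‖Kop (P * ΔPᵀ + ΔP * Pᵀ)‖ ^ 2 +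
    2 * Matrix.trace ((Fm Pbar P)ᵀ * Kop (ΔP * ΔPᵀ))

/-- `x` is a local minimizer of `g`: there is `δ > 0` with `g x ≤ g y` whenever `‖y − x‖ ≤ δ`. -/
def IsLocMin {E : Type*} [SeminormedAddCommGroup E] (g : E → ℝ) (x : E) : Prop :=
  ∃ δ > 0, ∀ y, ‖y - x‖ ≤ δ → g x ≤ g y


lemma sum_key {n : ℕ} (s g : Fin n → Fin n → ℝ)
    (hs : ∀ i j, s i j = s j i)
    (hsg : ∀ i j, s i j = g i i + g j j - 2 * g i j) :
    ∑ i, ∑ j, (2 * s i j * g i i - 2 * s i j * g i j) = ∑ i, ∑ j, (s i j) ^ 2 := by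
  have hswap : ∑ i, ∑ j, s i j * g i i = ∑ i, ∑ j, s i j * g j j := by
    rw [Finset.sum_comm]
    refine Finset.sum_congr rfl fun a _ => Finset.sum_congr rfl fun b _ => ?_
    rw [hs b a]
  have e1 : ∀ i j, 2 * s i j * g i i - 2 * s i j * g i j
      = (s i j) ^ 2 + (s i j * g i i - s i j * g j j) := by
    intro i j; rw [hsg i j]; ring
  simp only [e1, Finset.sum_add_distrib, Finset.sum_sub_distrib]
  rw [hswap]; ring

/-- if `D̄ = 0` then every stationary point of `f` is a global minimizer. -/
theorem stmt_13 {n d : ℕ} (hn : 0 < n) (hd : 0 < d)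
    (Pbar : Matrix (Fin n) (Fin d) ℝ) (hPbar : Pbarᵀ *ᵥ eV n = 0)
    (hD : Kop (Pbar * Pbarᵀ) = 0)
    (P : Matrix (Fin n) (Fin d) ℝ) (hstat : Kstar (Fm Pbar P) * P = 0) :
    Fm Pbar P = 0 := by
  classical
  have hF : Fm Pbar P = Kop (P * Pᵀ) := by unfold Fm; rw [hD, sub_zero]
  set G : Matrix (Fin n) (Fin n) ℝ := P * Pᵀ with hGdef
  set S : Matrix (Fin n) (Fin n) ℝ := Kop G with hSdef
  have hGsym : ∀ i j, G i j = G j i := by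
    intro i j
    simp [hGdef, Matrix.mul_apply, Matrix.transpose_apply, mul_comm]
  have hsg : ∀ i j, S i j = G i i + G j j - 2 * G i j := by
    intro i j
    simp [hSdef, Kop, Matrix.vecMulVec_apply, eV, Matrix.diag]
  have hSsym : ∀ i j, S i j = S j i := by
    intro i j
    rw [hsg, hsg, hGsym i j]; ring
  -- stationarity gives trace (Kstar S * G) = 0
  have h0 : Matrix.trace (Kstar S * G) = 0 := by
    have : Kstar S * G = (Kstar S * P) * Pᵀ := by rw [Matrix.mul_assoc]
    rw [this, ← hF, hstat, Matrix.zero_mul, Matrix.trace_zero]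
  -- compute the trace entrywise
  have htr : Matrix.trace (Kstar S * G)
      = ∑ i, ∑ j, (2 * S i j * G i i - 2 * S i j * G i j) := by
    rw [Matrix.trace]
    refine Finset.sum_congr rfl fun i _ => ?_
    rw [Matrix.diag, Matrix.mul_apply]
    have hterm : ∀ k, Kstar S i k * G k i
        = (if i = k then 2 * (∑ j, S i j) * G i i else 0) - 2 * S i k * G i k := by
      intro k
      simp only [Kstar, Matrix.smul_apply, Matrix.sub_apply, Matrix.diagonal_apply,
        Matrix.mulVec, dotProduct, eV, mul_one, smul_eq_mul]
      by_cases h : i = k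
      · subst h; simp; ring
      · simp only [h, if_false]
        rw [hGsym k i]; ring
    simp only [hterm]
    rw [Finset.sum_sub_distrib, Finset.sum_sub_distrib, Finset.sum_ite_eq,
      if_pos (Finset.mem_univ i), Finset.mul_sum, Finset.sum_mul]
  have hsum : ∑ i, ∑ j, (S i j) ^ 2 = 0 := by
    rw [← sum_key S G hSsym hsg, ← htr, h0]
  have hSzero : ∀ i j, S i j = 0 := by
    intro i j
    have h1 : ∀ i ∈ Finset.univ, (0:ℝ) ≤ ∑ j, (S i j) ^ 2 := by
      intro i _; positivity
    have h2 : ∑ j, (S i j) ^ 2 = 0 :=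
      (Finset.sum_eq_zero_iff_of_nonneg h1).mp hsum i (Finset.mem_univ i)
    have h3 : ∀ j ∈ Finset.univ, (0:ℝ) ≤ (S i j) ^ 2 := by intro j _; positivity
    have h4 := (Finset.sum_eq_zero_iff_of_nonneg h3).mp h2 j (Finset.mem_univ j)
    exact pow_eq_zero_iff (by norm_num) |>.mp h4
  rw [hF]
  ext i j
  exact hSzero i j
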